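/- The generating function identity Σ_{n ≥ 0} q^n Σ_{|λ|=n} m_λ(1, z₂, z₂², ...) h_λ(1, z₁, z₁², ...) = ∏_{i,j ≥ 0} (1 - z₁^i z₂^j q)^{-1} holds as an identity of formal power series in q, z₁, z₂. -/

import Mathlib

set_option maxHeartbeats 1000000


open PowerSeries

/-- The specialization `h_k(1, z, z², ...)` of the complete homogeneous symmetric
function: the coefficient of `z^N` counts multisets of exponents (one exponent
`i ≥ 0` for each of the `k` chosen variables `x_{i+1} = z^i`) of size `k`
summing to `N`. -/
noncomputable def specH (k : ℕ) : PowerSeries ℤ :=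
  PowerSeries.mk fun N => (Set.ncard {S : Multiset ℕ | Multiset.card S = k ∧ S.sum = N} : ℤ)

/-- The specialization `m_λ(1, z, z², ...)` of the monomial symmetric function:
the sum of `z^{Σ i·α_i}` over all distinct exponent sequences `α` whose multiset
of nonzero values equals the parts of `λ`. -/
noncomputable def specM (lam : Multiset ℕ) : PowerSeries ℤ :=
  PowerSeries.mk fun N => (Set.ncard {α : ℕ →₀ ℕ |
    Multiset.map α α.support.val = lam ∧ (α.sum fun i a => i * a) = N} : ℤ)

/-- `[k]_z = ∏_{1 ≤ j ≤ k} (1 - z^j)`. -/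
noncomputable def qfac (k : ℕ) : PowerSeries ℤ :=
  ∏ j ∈ Finset.range k, (1 - (PowerSeries.X : PowerSeries ℤ) ^ (j + 1))

/-- `h_λ(1,z,z²,...) = ∏_k h_{λ_k}(1,z,z²,...)`. -/
noncomputable def specHMulti (lam : Multiset ℕ) : PowerSeries ℤ :=
  (lam.map specH).prod


open Finset MvPowerSeries

noncomputable section CauchyAux

def eij (i j k : ℕ) : Fin 3 →₀ ℕ :=
  Finsupp.single 0 (i * k) + Finsupp.single 1 (j * k) + Finsupp.single 2 k

@[simp] lemma eij_apply0 (i j k : ℕ) : eij i j k 0 = i * k := by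
  simp [eij, Finsupp.single_apply]

@[simp] lemma eij_apply1 (i j k : ℕ) : eij i j k 1 = j * k := by
  simp [eij, Finsupp.single_apply]

@[simp] lemma eij_apply2 (i j k : ℕ) : eij i j k 2 = k := by
  simp [eij, Finsupp.single_apply]

lemma fin3_ext {e f : Fin 3 →₀ ℕ} (h0 : e 0 = f 0) (h1 : e 1 = f 1) (h2 : e 2 = f 2) :
    e = f := by
  ext x
  fin_cases x <;> assumption

@[simp] lemma eij_zero (i j : ℕ) : eij i j 0 = 0 := by
  apply fin3_ext <;> simp

lemma eij_add (i j a b : ℕ) : eij i j a + eij i j b = eij i j (a + b) := by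
  apply fin3_ext <;> simp [Nat.mul_add]

/-- The geometric series `∑_k (X0^i X1^j X2)^k`. -/
def G (i j : ℕ) : MvPowerSeries (Fin 3) ℤ :=
  fun e => if e = eij i j (e 2) then 1 else 0

lemma coeff_G (i j : ℕ) (d : Fin 3 →₀ ℕ) :
    MvPowerSeries.coeff d (G i j) = if d = eij i j (d 2) then 1 else 0 :=
  rfl

def mn (i j : ℕ) : MvPowerSeries (Fin 3) ℤ :=
  MvPowerSeries.X 0 ^ i * MvPowerSeries.X 1 ^ j * MvPowerSeries.X 2

lemma mn_eq (i j : ℕ) : mn i j = MvPowerSeries.monomial (eij i j 1) 1 := by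
  have : eij i j 1 = Finsupp.single 0 i + Finsupp.single 1 j + Finsupp.single 2 1 := by
    simp [eij]
  rw [mn, this, MvPowerSeries.X_pow_eq, MvPowerSeries.X_pow_eq (n := j), MvPowerSeries.X,
    MvPowerSeries.monomial_mul_monomial, MvPowerSeries.monomial_mul_monomial]
  norm_num

lemma one_sub_mn_mul_G (i j : ℕ) : (1 - mn i j) * G i j = 1 := by
  ext d
  rw [sub_mul, one_mul, map_sub, mn_eq, MvPowerSeries.coeff_monomial_mul]
  simp only [coeff_G, one_mul, MvPowerSeries.coeff_one]
  by_cases hd : d = 0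
  · subst hd
    have h1 : ¬ (eij i j 1 ≤ (0 : Fin 3 →₀ ℕ)) := by
      intro h
      have := (Finsupp.le_def.mp h) 2
      simp at this
    rw [if_neg h1, if_pos rfl, if_pos (by simp)]
    ring
  · by_cases hG : d = eij i j (d 2)
    · have hd2 : 1 ≤ d 2 := by
        rcases Nat.eq_zero_or_pos (d 2) with h0 | h
        · exact absurd (by rw [hG, h0, eij_zero]) hd
        · exact h
      have hle : eij i j 1 ≤ d := by
        conv_rhs => rw [hG]
        rw [Finsupp.le_def]
        intro x
        fin_cases x <;> simp <;> nlinarith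
      have hsub : d - eij i j 1 = eij i j (d 2 - 1) := by
        conv_lhs => rw [hG]
        apply fin3_ext <;> simp [Finsupp.tsub_apply, Nat.mul_sub]
      rw [if_pos hG, if_pos hle, hsub, if_neg hd, if_pos (by simp)]
      ring
    · rw [if_neg hG, if_neg hd]
      rcases em (eij i j 1 ≤ d) with hle | hle
      · have hd2 : 1 ≤ d 2 := by
          have := (Finsupp.le_def.mp hle) 2
          simpa using this
        have hsub2 : (d - eij i j 1) 2 = d 2 - 1 := by
          simp [Finsupp.tsub_apply]
        have hc : ¬ (d - eij i j 1 = eij i j ((d - eij i j 1) 2)) := by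
          intro hs
          apply hG
          conv_lhs => rw [← tsub_add_cancel_of_le hle, hs, hsub2, eij_add]
          congr 1
          omega
        rw [if_pos hle, if_neg hc]
        ring
      · rw [if_neg hle]
        ring

lemma invOfUnit_eq_G (i j : ℕ) :
    MvPowerSeries.invOfUnit
      (1 - (MvPowerSeries.X 0 : MvPowerSeries (Fin 3) ℤ) ^ i *
        (MvPowerSeries.X 1) ^ j * MvPowerSeries.X 2) 1 = G i j := by
  show MvPowerSeries.invOfUnit (1 - mn i j) 1 = G i j
  have hc : MvPowerSeries.constantCoeff (1 - mn i j) = ((1 : ℤˣ) : ℤ) := by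
    rw [map_sub, map_one, mn_eq]
    have hne : eij i j 1 ≠ 0 := by
      intro h
      have := congrArg (fun f => f 2) h
      simp at this
    rw [← MvPowerSeries.coeff_zero_eq_constantCoeff_apply, MvPowerSeries.coeff_monomial,
      if_neg (fun h => hne h.symm)]
    norm_num
  have h1 := MvPowerSeries.mul_invOfUnit (1 - mn i j) 1 hc
  calc MvPowerSeries.invOfUnit (1 - mn i j) 1
      = ((1 - mn i j) * G i j) * MvPowerSeries.invOfUnit (1 - mn i j) 1 := by
        rw [one_sub_mn_mul_G, one_mul]
    _ = G i j * ((1 - mn i j) * MvPowerSeries.invOfUnit (1 - mn i j) 1) := by ring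
    _ = G i j := by rw [h1, mul_one]


def sN (M : ℕ) : Finset (ℕ × ℕ) := Finset.range M ×ˢ Finset.range M

/-- matrices `f(i,j)` with support in `[M]×[M]`, `Σ f = d 2`, `Σ i·f(i,j) = d 0`,
`Σ j·f(i,j) = d 1`. -/
def Tfin (M : ℕ) (d : Fin 3 →₀ ℕ) : Finset ((ℕ × ℕ) →₀ ℕ) :=
  ((sN M).finsuppAntidiag (d 2)).filter
    (fun f => f.sum (fun p v => p.1 * v) = d 0 ∧ f.sum (fun p v => p.2 * v) = d 1)

lemma mem_Tfin {M : ℕ} {d : Fin 3 →₀ ℕ} {f : (ℕ × ℕ) →₀ ℕ} :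
    f ∈ Tfin M d ↔ f.support ⊆ sN M ∧ f.sum (fun _ v => v) = d 2 ∧
      f.sum (fun p v => p.1 * v) = d 0 ∧ f.sum (fun p v => p.2 * v) = d 1 := by
  rw [Tfin, Finset.mem_filter, Finset.mem_finsuppAntidiag']
  tauto

lemma coeff_prod_G (M : ℕ) (d : Fin 3 →₀ ℕ) :
    MvPowerSeries.coeff d (∏ p ∈ sN M, G p.1 p.2) = ((Tfin M d).card : ℤ) := by
  classical
  rw [MvPowerSeries.coeff_prod]
  simp only [coeff_G]
  rw [Finset.sum_congr rfl (fun l _ => Finset.prod_boole (p := fun p : ℕ × ℕ => l p = eij p.1 p.2 (l p 2)))]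
  rw [Finset.sum_boole]
  congr 1
  refine Finset.card_bij'
    (fun l _ => Finsupp.onFinset l.support (fun p => l p 2)
      (fun p hp => Finsupp.mem_support_iff.mpr (fun h => hp (by simp [h]))))
    (fun f _ => Finsupp.onFinset f.support (fun p => eij p.1 p.2 (f p))
      (fun p hp => Finsupp.mem_support_iff.mpr (fun h => hp (by simp [h]))))
    ?hi ?hj ?left ?right
  case hi =>
    intro l hl
    rw [Finset.mem_filter, Finset.mem_finsuppAntidiag] at hl
    obtain ⟨⟨hsum, hsupp⟩, hcond⟩ := hl
    set f : (ℕ × ℕ) →₀ ℕ := Finsupp.onFinset l.support (fun p => l p 2)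
      (fun p hp => Finsupp.mem_support_iff.mpr (fun h => hp (by simp [h]))) with hf
    have hfs : f.support ⊆ sN M := (Finsupp.support_onFinset_subset).trans hsupp
    have happ : ∀ c : Fin 3, d c = ∑ p ∈ sN M, (l p) c := by
      intro c
      rw [← hsum, Finset.sum_apply']
    have hfv : ∀ p ∈ sN M, l p = eij p.1 p.2 (f p) := fun p hp => hcond p hp
    rw [mem_Tfin]
    refine ⟨hfs, ?_, ?_, ?_⟩
    · rw [Finsupp.sum_of_support_subset f hfs _ (fun _ _ => rfl), happ 2]
      exact Finset.sum_congr rfl (fun p hp => by rw [hfv p hp, eij_apply2])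
    · rw [Finsupp.sum_of_support_subset f hfs _ (fun i _ => Nat.mul_zero i.1), happ 0]
      exact (Finset.sum_congr rfl (fun p hp => by rw [hfv p hp, eij_apply0])).symm
    · rw [Finsupp.sum_of_support_subset f hfs _ (fun i _ => Nat.mul_zero i.2), happ 1]
      exact (Finset.sum_congr rfl (fun p hp => by rw [hfv p hp, eij_apply1])).symm
  case hj =>
    intro f hf
    rw [mem_Tfin] at hf
    obtain ⟨hsupp, h2, h0, h1⟩ := hf
    set l : (ℕ × ℕ) →₀ (Fin 3 →₀ ℕ) := Finsupp.onFinset f.support (fun p => eij p.1 p.2 (f p))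
      (fun p hp => Finsupp.mem_support_iff.mpr (fun h => hp (by simp [h]))) with hlf
    have hls : l.support ⊆ sN M := (Finsupp.support_onFinset_subset).trans hsupp
    rw [Finset.mem_filter, Finset.mem_finsuppAntidiag]
    refine ⟨⟨?_, hls⟩, fun p _ => by simp [hlf, Finsupp.onFinset_apply]⟩
    apply fin3_ext
    · rw [Finset.sum_apply', ← h0,
        Finsupp.sum_of_support_subset f hsupp _ (fun i _ => Nat.mul_zero i.1)]
      exact Finset.sum_congr rfl (fun p hp => by simp [hlf])
    · rw [Finset.sum_apply', ← h1,
        Finsupp.sum_of_support_subset f hsupp _ (fun i _ => Nat.mul_zero i.2)]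
      exact Finset.sum_congr rfl (fun p hp => by simp [hlf])
    · rw [Finset.sum_apply', ← h2,
        Finsupp.sum_of_support_subset f hsupp _ (fun _ _ => rfl)]
      exact Finset.sum_congr rfl (fun p hp => by simp [hlf])
  case left =>
    intro l hl
    rw [Finset.mem_filter, Finset.mem_finsuppAntidiag] at hl
    obtain ⟨⟨hsum, hsupp⟩, hcond⟩ := hl
    ext p c
    simp only [Finsupp.onFinset_apply]
    by_cases hp : p ∈ l.support
    · rw [← hcond p (hsupp hp)]
    · rw [Finsupp.notMem_support_iff.mp hp]
      simp
  case right =>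
    intro f hf
    ext p
    simp [Finsupp.onFinset_apply]

lemma Tfin_stable {d : Fin 3 →₀ ℕ} {M : ℕ} (hM : max (d 0) (d 1) + 1 ≤ M) :
    Tfin M d = Tfin (max (d 0) (d 1) + 1) d := by
  set N := max (d 0) (d 1) + 1 with hN
  ext f
  rw [mem_Tfin, mem_Tfin]
  constructor
  · rintro ⟨hs, h2, h0, h1⟩
    refine ⟨?_, h2, h0, h1⟩
    intro p hp
    have hp1 : p.1 ≤ d 0 := by
      rw [← h0]
      calc p.1 = p.1 * 1 := (Nat.mul_one _).symm
        _ ≤ p.1 * f p := Nat.mul_le_mul_left _ (Nat.one_le_iff_ne_zero.mpr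
            (Finsupp.mem_support_iff.mp hp))
        _ ≤ _ := Finset.single_le_sum (f := fun q => q.1 * f q) (fun q _ => Nat.zero_le _) hp
    have hp2 : p.2 ≤ d 1 := by
      rw [← h1]
      calc p.2 = p.2 * 1 := (Nat.mul_one _).symm
        _ ≤ p.2 * f p := Nat.mul_le_mul_left _ (Nat.one_le_iff_ne_zero.mpr
            (Finsupp.mem_support_iff.mp hp))
        _ ≤ _ := Finset.single_le_sum (f := fun q => q.2 * f q) (fun q _ => Nat.zero_le _) hp
    simp only [sN, Finset.mem_product, Finset.mem_range]
    omega
  · rintro ⟨hs, h2, h0, h1⟩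
    refine ⟨hs.trans ?_, h2, h0, h1⟩
    intro p hp
    simp only [sN, Finset.mem_product, Finset.mem_range] at hp ⊢
    omega

/-- multisets of `ℕ` with given cardinality and sum, as a finset -/
def HFin (k n : ℕ) : Finset (Multiset ℕ) :=
  (Finset.Nat.antidiagonalTuple k n).image (fun x => (List.ofFn x : Multiset ℕ))

lemma mem_HFin {k n : ℕ} {S : Multiset ℕ} :
    S ∈ HFin k n ↔ Multiset.card S = k ∧ S.sum = n := by
  rw [HFin, Finset.mem_image]
  constructor
  · rintro ⟨x, hx, rfl⟩
    rw [Finset.Nat.mem_antidiagonalTuple] at hx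
    constructor
    · simp
    · simp [List.sum_ofFn, hx]
  · rintro ⟨hcard, hsum⟩
    induction S using Quotient.inductionOn with
    | h L =>
      have hL : L.length = k := by simpa using hcard
      subst hL
      refine ⟨L.get, ?_, by simp⟩
      rw [Finset.Nat.mem_antidiagonalTuple]
      calc ∑ i, L.get i = (List.ofFn L.get).sum := by rw [List.sum_ofFn]
        _ = n := by simpa using hsum

lemma coeff_specH (k n : ℕ) :
    PowerSeries.coeff n (specH k) = ((HFin k n).card : ℤ) := by
  rw [specH, PowerSeries.coeff_mk]
  congr 1
  have : {S : Multiset ℕ | Multiset.card S = k ∧ S.sum = n} = ↑(HFin k n) := by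
    ext S
    simp [mem_HFin]
  rw [this, Set.ncard_coe_finset]

/-- partitions of `n` (as multisets of positive parts), as a finset -/
def Pfin (n : ℕ) : Finset (Multiset ℕ) :=
  Finset.univ.image (fun π : Nat.Partition n => π.parts)

lemma mem_Pfin {n : ℕ} {lam : Multiset ℕ} :
    lam ∈ Pfin n ↔ (0 : ℕ) ∉ lam ∧ lam.sum = n := by
  rw [Pfin, Finset.mem_image]
  constructor
  · rintro ⟨π, _, rfl⟩
    exact ⟨fun h => lt_irrefl 0 (π.parts_pos h), π.parts_sum⟩
  · rintro ⟨h0, hsum⟩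
    exact ⟨⟨lam, fun {i} hi => Nat.pos_of_ne_zero (fun h => h0 (h ▸ hi)), hsum⟩,
      Finset.mem_univ _, rfl⟩

/-- the `α`'s contributing to `specM lam` for a partition `lam` of `n2`,
with weighted sum `n1`. -/
def MFin (lam : Multiset ℕ) (n1 n2 : ℕ) : Finset (ℕ →₀ ℕ) :=
  ((Finset.range (n1 + 1)).finsuppAntidiag n2).filter
    (fun α => Multiset.map α α.support.val = lam ∧ α.sum (fun i a => i * a) = n1)

lemma support_sum_eq (α : ℕ →₀ ℕ) : ∑ j ∈ α.support, α j = (Multiset.map α α.support.val).sum := by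
  rfl

lemma weighted_support_bound {α : ℕ →₀ ℕ} {n1 : ℕ} (h : α.sum (fun i a => i * a) = n1) :
    α.support ⊆ Finset.range (n1 + 1) := by
  intro j hj
  rw [Finset.mem_range]
  have h1 : j * 1 ≤ j * α j :=
    Nat.mul_le_mul_left _ (Nat.one_le_iff_ne_zero.mpr (Finsupp.mem_support_iff.mp hj))
  have h2 : j * α j ≤ α.sum (fun i a => i * a) :=
    Finset.single_le_sum (f := fun i => i * α i) (fun i _ => Nat.zero_le _) hj
  omega

lemma coeff_specM {lam : Multiset ℕ} {n1 n2 : ℕ} (hlam : lam.sum = n2) :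
    PowerSeries.coeff n1 (specM lam) = ((MFin lam n1 n2).card : ℤ) := by
  rw [specM, PowerSeries.coeff_mk]
  congr 1
  have : {α : ℕ →₀ ℕ | Multiset.map α α.support.val = lam ∧ (α.sum fun i a => i * a) = n1}
      = ↑(MFin lam n1 n2) := by
    ext α
    simp only [Set.mem_setOf_eq, MFin, Finset.coe_filter, Finset.mem_finsuppAntidiag]
    constructor
    · rintro ⟨hmap, hw⟩
      refine ⟨⟨?_, weighted_support_bound hw⟩, hmap, hw⟩
      rw [← hlam, ← hmap, ← support_sum_eq]
      exact (Finset.sum_subset (weighted_support_bound hw)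
        (fun x _ hx => Finsupp.notMem_support_iff.mp hx)).symm
    · rintro ⟨_, hmap, hw⟩
      exact ⟨hmap, hw⟩
  rw [this, Set.ncard_coe_finset]

lemma specHMulti_eq {α : ℕ →₀ ℕ} {lam : Multiset ℕ}
    (h : Multiset.map α α.support.val = lam) :
    specHMulti lam = ∏ j ∈ α.support, specH (α j) := by
  rw [specHMulti, ← h, Multiset.map_map, Finset.prod_eq_multiset_prod]
  rfl

/-- choices of `(n, g)`: a decomposition `n` of `n0` over the support of `α` together
with multisets `g j` of card `α j` and sum `n j`. -/
def SigF (n0 : ℕ) (α : ℕ →₀ ℕ) : Finset ((_ : ℕ →₀ ℕ) × (ℕ →₀ Multiset ℕ)) :=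
  (α.support.finsuppAntidiag n0).sigma
    (fun n => α.support.finsupp (fun j => HFin (α j) (n j)))

lemma coeff_H_card (n0 : ℕ) (α : ℕ →₀ ℕ) :
    PowerSeries.coeff n0 (∏ j ∈ α.support, specH (α j)) = ((SigF n0 α).card : ℤ) := by
  classical
  rw [PowerSeries.coeff_prod, SigF, Finset.card_sigma, Nat.cast_sum]
  apply Finset.sum_congr rfl
  intro n _
  rw [Finset.card_finsupp, Nat.cast_prod]
  exact Finset.prod_congr rfl (fun j _ => coeff_specH _ _)


def AllM (n1 n2 : ℕ) : Finset (ℕ →₀ ℕ) :=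
  ((Finset.range (n1 + 1)).finsuppAntidiag n2).filter (fun α => α.sum (fun i a => i * a) = n1)

lemma mem_AllM {n1 n2 : ℕ} {α : ℕ →₀ ℕ} :
    α ∈ AllM n1 n2 ↔ (∑ j ∈ Finset.range (n1 + 1), α j = n2) ∧
      α.support ⊆ Finset.range (n1 + 1) ∧ α.sum (fun i a => i * a) = n1 := by
  rw [AllM, Finset.mem_filter, Finset.mem_finsuppAntidiag]
  tauto

lemma MFin_eq_filter (lam : Multiset ℕ) (n1 n2 : ℕ) :
    MFin lam n1 n2
      = (AllM n1 n2).filter (fun (α : ℕ →₀ ℕ) => Multiset.map α α.support.val = lam) := by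
  ext α
  rw [MFin, AllM, Finset.mem_filter, Finset.mem_filter, Finset.mem_filter]
  tauto

def Big (d : Fin 3 →₀ ℕ) : Finset ((_ : ℕ →₀ ℕ) × ((_ : ℕ →₀ ℕ) × (ℕ →₀ Multiset ℕ))) :=
  (AllM (d 1) (d 2)).sigma (fun α => SigF (d 0) α)

lemma count_sum_eq (Nb : ℕ) (g : ℕ →₀ Multiset ℕ) (hel : ∀ j, ∀ x ∈ g j, x < Nb)
    (φ : ℕ → ℕ → ℕ) :
    ∑ p ∈ sN Nb, φ p.1 p.2 * Multiset.count p.1 (g p.2)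
      = ∑ j ∈ Finset.range Nb, ((g j).map (fun x => φ x j)).sum := by
  classical
  rw [sN, Finset.sum_product_right]
  apply Finset.sum_congr rfl
  intro j _
  rw [Finset.sum_multiset_map_count]
  rw [← Finset.sum_subset (s₁ := (g j).toFinset) (s₂ := Finset.range Nb)
      (fun x hx => Finset.mem_range.mpr (hel j x (Multiset.mem_toFinset.mp hx)))
      (fun x _ hx => by
        rw [Multiset.count_eq_zero_of_notMem (fun hm => hx (Multiset.mem_toFinset.mpr hm)),
          Nat.mul_zero])]
  exact Finset.sum_congr rfl fun i _ => by rw [smul_eq_mul, Nat.mul_comm]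

lemma sum_count_eq' (Nb : ℕ) (g : ℕ →₀ Multiset ℕ) (hel : ∀ j, ∀ x ∈ g j, x < Nb) :
    (∑ p ∈ sN Nb, Multiset.count p.1 (g p.2)
        = ∑ j ∈ Finset.range Nb, Multiset.card (g j))
    ∧ (∑ p ∈ sN Nb, p.1 * Multiset.count p.1 (g p.2) = ∑ j ∈ Finset.range Nb, (g j).sum)
    ∧ (∑ p ∈ sN Nb, p.2 * Multiset.count p.1 (g p.2)
        = ∑ j ∈ Finset.range Nb, j * Multiset.card (g j)) := by
  refine ⟨?_, ?_, ?_⟩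
  · have h := count_sum_eq Nb g hel (fun _ _ => 1)
    simp only [one_mul] at h
    rw [h]
    exact Finset.sum_congr rfl fun j _ => by
      rw [Multiset.map_const', Multiset.sum_replicate, smul_eq_mul, Nat.mul_one]
  · have h := count_sum_eq Nb g hel (fun x _ => x)
    rw [h]
    exact Finset.sum_congr rfl fun j _ => by rw [Multiset.map_id']
  · have h := count_sum_eq Nb g hel (fun _ j => j)
    rw [h]
    exact Finset.sum_congr rfl fun j _ => by
      rw [Multiset.map_const', Multiset.sum_replicate, smul_eq_mul, Nat.mul_comm]

/-- from columns (as multisets) to a matrix -/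
def colToMat (g : ℕ →₀ Multiset ℕ) : (ℕ × ℕ) →₀ ℕ :=
  Finsupp.onFinset (g.support.biUnion (fun j => (g j).toFinset.image (fun i => (i, j))))
    (fun p => Multiset.count p.1 (g p.2))
    (fun p hp => by
      simp only [ne_eq] at hp
      rw [Finset.mem_biUnion]
      refine ⟨p.2, ?_, ?_⟩
      · rw [Finsupp.mem_support_iff]
        intro h
        apply hp
        simp [h]
      · rw [Finset.mem_image]
        refine ⟨p.1, ?_, rfl⟩
        rw [Multiset.mem_toFinset, ← Multiset.count_pos]
        have h : Multiset.count p.1 (g p.2) ≠ 0 := fun h => hp (by simpa using h)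
        omega)

@[simp] lemma colToMat_apply (g : ℕ →₀ Multiset ℕ) (p : ℕ × ℕ) :
    colToMat g p = Multiset.count p.1 (g p.2) := rfl

/-- from a matrix to its columns (as multisets) -/
def matToCol (N : ℕ) (f : (ℕ × ℕ) →₀ ℕ) : ℕ →₀ Multiset ℕ :=
  Finsupp.onFinset (f.support.image Prod.snd)
    (fun j => ∑ i ∈ Finset.range N, Multiset.replicate (f (i, j)) i)
    (fun j hj => by
      simp only [ne_eq] at hj
      by_contra hns
      apply hj
      apply Finset.sum_eq_zero
      intro i _
      have h0 : f (i, j) = 0 := by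
        rw [← Finsupp.notMem_support_iff]
        intro hmem
        exact hns (Finset.mem_image.mpr ⟨(i, j), hmem, rfl⟩)
      rw [h0, Multiset.replicate_zero])

lemma count_matToCol {N : ℕ} {f : (ℕ × ℕ) →₀ ℕ} (hsupp : f.support ⊆ sN N) (x j : ℕ) :
    Multiset.count x (matToCol N f j) = f (x, j) := by
  classical
  show Multiset.count x (∑ i ∈ Finset.range N, Multiset.replicate (f (i, j)) i) = f (x, j)
  rw [Multiset.count_sum']
  simp only [Multiset.count_replicate]
  rw [Finset.sum_ite_eq' (Finset.range N) x (fun i => f (i, j))]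
  by_cases hx : x ∈ Finset.range N
  · rw [if_pos hx]
  · rw [if_neg hx]
    symm
    rw [← Finsupp.notMem_support_iff]
    intro hmem
    apply hx
    have h := hsupp hmem
    simp only [sN, Finset.mem_product, Finset.mem_range] at h
    exact Finset.mem_range.mpr h.1

lemma Big_facts {d : Fin 3 →₀ ℕ} {α n : ℕ →₀ ℕ} {g : ℕ →₀ Multiset ℕ}
    (hα : α ∈ AllM (d 1) (d 2)) (hn : n ∈ α.support.finsuppAntidiag (d 0))
    (hg : g ∈ α.support.finsupp (fun j => HFin (α j) (n j))) :
    (∀ j, Multiset.card (g j) = α j) ∧ (∀ j, (g j).sum = n j) ∧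
      g.support ⊆ α.support ∧
      (∀ j, ∀ x ∈ g j, x ≤ d 0) ∧ (∀ j ∈ g.support, j ≤ d 1) := by
  classical
  rw [mem_AllM] at hα
  obtain ⟨hα2, hαs, hα1⟩ := hα
  rw [Finset.mem_finsuppAntidiag] at hn
  obtain ⟨hn0, hns⟩ := hn
  rw [Finset.mem_finsupp_iff] at hg
  obtain ⟨hgs, hgmem⟩ := hg
  have hcard : ∀ j, Multiset.card (g j) = α j := by
    intro j
    by_cases hj : j ∈ α.support
    · exact (mem_HFin.mp (hgmem j hj)).1
    · have hjg : g j = 0 := Finsupp.notMem_support_iff.mp (fun h => hj (hgs h))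
      rw [hjg, Finsupp.notMem_support_iff.mp hj]
      simp
  have hsum : ∀ j, (g j).sum = n j := by
    intro j
    by_cases hj : j ∈ α.support
    · exact (mem_HFin.mp (hgmem j hj)).2
    · have hjg : g j = 0 := Finsupp.notMem_support_iff.mp (fun h => hj (hgs h))
      have hjn : n j = 0 := Finsupp.notMem_support_iff.mp (fun h => hj (hns h))
      rw [hjg, hjn]
      simp
  refine ⟨hcard, hsum, hgs, ?_, ?_⟩
  · intro j x hx
    have h1 : x ≤ (g j).sum := Multiset.single_le_sum (fun y _ => Nat.zero_le y) x hx
    have h2 : n j ≤ d 0 := by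
      by_cases hj : j ∈ α.support
      · rw [← hn0]
        exact Finset.single_le_sum (f := fun i => n i) (fun i _ => Nat.zero_le _) hj
      · rw [Finsupp.notMem_support_iff.mp (fun h => hj (hns h))]
        exact Nat.zero_le _
    rw [hsum j] at h1
    omega
  · intro j hj
    have h := Finset.mem_range.mp (hαs (hgs hj))
    omega

lemma colToMat_mem {d : Fin 3 →₀ ℕ} {α n : ℕ →₀ ℕ} {g : ℕ →₀ Multiset ℕ}
    (hα : α ∈ AllM (d 1) (d 2)) (hn : n ∈ α.support.finsuppAntidiag (d 0))
    (hg : g ∈ α.support.finsupp (fun j => HFin (α j) (n j))) :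
    colToMat g ∈ Tfin (max (d 0) (d 1) + 1) d := by
  classical
  obtain ⟨hcard, hsum, hgs, hxb, hjb⟩ := Big_facts hα hn hg
  rw [mem_AllM] at hα
  obtain ⟨hα2, hαs, hα1⟩ := hα
  rw [Finset.mem_finsuppAntidiag] at hn
  obtain ⟨hn0, hns⟩ := hn
  set N := max (d 0) (d 1) + 1 with hN
  have hd0 : d 0 < N := by omega
  have hd1 : d 1 < N := by omega
  have hel : ∀ j, ∀ x ∈ g j, x < N := fun j x hx => lt_of_le_of_lt (hxb j x hx) hd0
  have hsupp : (colToMat g).support ⊆ sN N := by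
    intro p hp
    have hp' : Multiset.count p.1 (g p.2) ≠ 0 := by
      have h := Finsupp.mem_support_iff.mp hp
      simpa using h
    have hmem : p.1 ∈ g p.2 := by
      rw [← Multiset.count_pos]
      omega
    have h2 : p.2 ∈ g.support := Finsupp.mem_support_iff.mpr
      (fun h => by rw [h] at hmem; simp at hmem)
    simp only [sN, Finset.mem_product, Finset.mem_range]
    exact ⟨lt_of_le_of_lt (hxb p.2 p.1 hmem) hd0, lt_of_le_of_lt (hjb p.2 h2) hd1⟩
  obtain ⟨c1, c2, c3⟩ := sum_count_eq' N g hel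
  have hrangeα : ∑ j ∈ Finset.range N, α j = ∑ j ∈ Finset.range (d 1 + 1), α j :=
    (Finset.sum_subset (Finset.range_subset_range.mpr (by omega))
      (fun x _ hx => Finsupp.notMem_support_iff.mp (fun h => hx (hαs h)))).symm
  have hrangen : ∑ j ∈ Finset.range N, n j = ∑ j ∈ α.support, n j :=
    (Finset.sum_subset (hαs.trans (Finset.range_subset_range.mpr (by omega)))
      (fun x _ hx => Finsupp.notMem_support_iff.mp (fun h => hx (hns h)))).symm
  have hrangew : ∑ j ∈ Finset.range N, j * α j = α.sum (fun i a => i * a) :=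
    (Finsupp.sum_of_support_subset α (hαs.trans (Finset.range_subset_range.mpr (by omega)))
      _ (fun i _ => Nat.mul_zero i)).symm
  rw [mem_Tfin]
  refine ⟨hsupp, ?_, ?_, ?_⟩
  · rw [Finsupp.sum_of_support_subset _ hsupp _ (fun _ _ => rfl)]
    simp only [colToMat_apply]
    calc ∑ p ∈ sN N, Multiset.count p.1 (g p.2)
        = ∑ j ∈ Finset.range N, Multiset.card (g j) := c1
      _ = ∑ j ∈ Finset.range N, α j := Finset.sum_congr rfl fun j _ => hcard j
      _ = d 2 := by rw [hrangeα, hα2]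
  · rw [Finsupp.sum_of_support_subset _ hsupp _ (fun i _ => Nat.mul_zero i.1)]
    simp only [colToMat_apply]
    calc ∑ p ∈ sN N, p.1 * Multiset.count p.1 (g p.2)
        = ∑ j ∈ Finset.range N, (g j).sum := c2
      _ = ∑ j ∈ Finset.range N, n j := Finset.sum_congr rfl fun j _ => hsum j
      _ = d 0 := by rw [hrangen, hn0]
  · rw [Finsupp.sum_of_support_subset _ hsupp _ (fun i _ => Nat.mul_zero i.2)]
    simp only [colToMat_apply]
    calc ∑ p ∈ sN N, p.2 * Multiset.count p.1 (g p.2)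
        = ∑ j ∈ Finset.range N, j * Multiset.card (g j) := c3
      _ = ∑ j ∈ Finset.range N, j * α j := Finset.sum_congr rfl fun j _ => by rw [hcard j]
      _ = d 1 := by rw [hrangew, hα1]

lemma col_mem {d : Fin 3 →₀ ℕ} {f : (ℕ × ℕ) →₀ ℕ} {g : ℕ →₀ Multiset ℕ}
    (hf : f ∈ Tfin (max (d 0) (d 1) + 1) d)
    (hc : ∀ x j, Multiset.count x (g j) = f (x, j)) :
    (g.mapRange Multiset.card rfl ∈ AllM (d 1) (d 2))
    ∧ (g.mapRange Multiset.sum rfl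
        ∈ (g.mapRange Multiset.card rfl).support.finsuppAntidiag (d 0))
    ∧ (g ∈ (g.mapRange Multiset.card rfl).support.finsupp
        (fun j => HFin (g.mapRange Multiset.card rfl j) (g.mapRange Multiset.sum rfl j))) := by
  classical
  set N := max (d 0) (d 1) + 1 with hN
  rw [mem_Tfin] at hf
  obtain ⟨hsupp, h2, h0, h1⟩ := hf
  set A := g.mapRange Multiset.card rfl with hAdef
  set B := g.mapRange Multiset.sum rfl with hBdef
  have hAj : ∀ j, A j = Multiset.card (g j) := fun j => Finsupp.mapRange_apply
  have hBj : ∀ j, B j = (g j).sum := fun j => Finsupp.mapRange_apply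
  have hel : ∀ j, ∀ x ∈ g j, x < N := by
    intro j x hx
    have hcnt : Multiset.count x (g j) ≠ 0 := by
      rw [← Multiset.count_pos] at hx
      omega
    rw [hc] at hcnt
    have hm := hsupp (Finsupp.mem_support_iff.mpr hcnt)
    simp only [sN, Finset.mem_product, Finset.mem_range] at hm
    exact hm.1
  have hjle : ∀ j, g j ≠ 0 → j ≤ d 1 := by
    intro j hne
    obtain ⟨x, hx⟩ := Multiset.exists_mem_of_ne_zero hne
    have hfx : f (x, j) ≠ 0 := by
      rw [← hc x j]
      rw [← Multiset.count_pos] at hx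
      omega
    have hmem : (x, j) ∈ f.support := Finsupp.mem_support_iff.mpr hfx
    have hterm : j * 1 ≤ j * f (x, j) :=
      Nat.mul_le_mul_left _ (Nat.one_le_iff_ne_zero.mpr hfx)
    have hle2 : j * f (x, j) ≤ f.sum (fun p v => p.2 * v) :=
      Finset.single_le_sum (f := fun q => q.2 * f q) (fun q _ => Nat.zero_le _) hmem
    rw [h1] at hle2
    omega
  have hgA : ∀ j, g j ≠ 0 ↔ A j ≠ 0 := by
    intro j
    rw [hAj, ne_eq, ne_eq, Multiset.card_eq_zero]
  have hAsupp : A.support ⊆ Finset.range (d 1 + 1) := by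
    intro j hj
    rw [Finset.mem_range]
    have h := hjle j ((hgA j).mpr (Finsupp.mem_support_iff.mp hj))
    omega
  have hAsuppN : A.support ⊆ Finset.range N :=
    hAsupp.trans (Finset.range_subset_range.mpr (by omega))
  obtain ⟨c1, c2, c3⟩ := sum_count_eq' N g hel
  have hfsum : ∀ (w : ℕ × ℕ → ℕ → ℕ), (∀ p, w p 0 = 0) →
      f.sum w = ∑ p ∈ sN N, w p (f p) :=
    fun w hw => Finsupp.sum_of_support_subset f hsupp w (fun p _ => hw p)
  have e1 : ∑ j ∈ Finset.range N, A j = d 2 := by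
    rw [← h2, hfsum (fun _ v => v) (fun _ => rfl)]
    rw [Finset.sum_congr rfl (fun j _ => hAj j), ← c1]
    exact Finset.sum_congr rfl fun p _ => by rw [hc p.1 p.2]
  have e2 : ∑ j ∈ Finset.range N, B j = d 0 := by
    rw [← h0, hfsum (fun p v => p.1 * v) (fun p => Nat.mul_zero p.1)]
    rw [Finset.sum_congr rfl (fun j _ => hBj j), ← c2]
    exact Finset.sum_congr rfl fun p _ => by rw [hc p.1 p.2]
  have e3 : ∑ j ∈ Finset.range N, j * A j = d 1 := by
    rw [← h1, hfsum (fun p v => p.2 * v) (fun p => Nat.mul_zero p.2)]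
    rw [Finset.sum_congr rfl (fun j _ => by rw [hAj j]), ← c3]
    exact Finset.sum_congr rfl fun p _ => by rw [hc p.1 p.2]
  have hBA : B.support ⊆ A.support := by
    intro j hj
    rw [Finsupp.mem_support_iff] at hj ⊢
    rw [← hgA j]
    intro h
    apply hj
    rw [hBj, h, Multiset.sum_zero]
  refine ⟨?_, ?_, ?_⟩
  · rw [mem_AllM]
    refine ⟨?_, hAsupp, ?_⟩
    · rw [Finset.sum_subset (Finset.range_subset_range.mpr (show d 1 + 1 ≤ N by omega))
        (fun x _ hx => Finsupp.notMem_support_iff.mp (fun h => hx (hAsupp h)))]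
      exact e1
    · rw [Finsupp.sum_of_support_subset A hAsuppN _ (fun i _ => Nat.mul_zero i)]
      exact e3
  · rw [Finset.mem_finsuppAntidiag]
    refine ⟨?_, hBA⟩
    rw [Finset.sum_subset hAsuppN (fun j _ hj => ?_)]
    · exact e2
    · have hgj : g j = 0 := by
        by_contra hne
        exact hj (Finsupp.mem_support_iff.mpr ((hgA j).mp hne))
      rw [hBj, hgj, Multiset.sum_zero]
  · rw [Finset.mem_finsupp_iff]
    refine ⟨?_, ?_⟩
    · intro j hj
      rw [Finsupp.mem_support_iff] at hj ⊢
      exact (hgA j).mp hj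
    · intro j _
      rw [mem_HFin]
      exact ⟨(hAj j).symm, (hBj j).symm⟩

lemma Big_card (d : Fin 3 →₀ ℕ) :
    (Big d).card = (Tfin (max (d 0) (d 1) + 1) d).card := by
  classical
  set N := max (d 0) (d 1) + 1 with hN
  refine Finset.card_bij'
    (fun x _ => colToMat x.2.2)
    (fun f _ => ⟨(matToCol N f).mapRange Multiset.card rfl,
      (matToCol N f).mapRange Multiset.sum rfl, matToCol N f⟩)
    ?hi ?hj ?left ?right
  case hi =>
    rintro ⟨α, n, g⟩ hx
    rw [Big, Finset.mem_sigma] at hx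
    obtain ⟨hα, hng⟩ := hx
    rw [SigF, Finset.mem_sigma] at hng
    exact colToMat_mem hα hng.1 hng.2
  case hj =>
    intro f hf
    have hsupp : f.support ⊆ sN N := by
      rw [mem_Tfin] at hf
      exact hf.1
    obtain ⟨m1, m2, m3⟩ := col_mem hf (fun x j => count_matToCol hsupp x j)
    rw [Big, Finset.mem_sigma]
    exact ⟨m1, by rw [SigF, Finset.mem_sigma]; exact ⟨m2, m3⟩⟩
  case left =>
    rintro ⟨α, n, g⟩ hx
    rw [Big, Finset.mem_sigma] at hx
    obtain ⟨hα, hng⟩ := hx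
    rw [SigF, Finset.mem_sigma] at hng
    obtain ⟨hcard, hsum, hgs, hxb, hjb⟩ := Big_facts hα hng.1 hng.2
    have hfT := colToMat_mem hα hng.1 hng.2
    have hfsupp : (colToMat g).support ⊆ sN N := by
      rw [mem_Tfin] at hfT
      exact hfT.1
    dsimp only
    have hG : matToCol N (colToMat g) = g := by
      apply Finsupp.ext
      intro j
      rw [Multiset.ext]
      intro x
      rw [count_matToCol hfsupp x j]
      rfl
    rw [hG]
    have hA2 : g.mapRange Multiset.card rfl = α := by
      apply Finsupp.ext
      intro j
      exact Finsupp.mapRange_apply.trans (hcard j)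
    have hB2 : g.mapRange Multiset.sum rfl = n := by
      apply Finsupp.ext
      intro j
      exact Finsupp.mapRange_apply.trans (hsum j)
    rw [hA2, hB2]
  case right =>
    intro f hf
    have hsupp : f.support ⊆ sN N := by
      rw [mem_Tfin] at hf
      exact hf.1
    dsimp only
    refine Finsupp.ext fun p => ?_
    rw [colToMat_apply, count_matToCol hsupp p.1 p.2]

lemma rhs_eq_card (d : Fin 3 →₀ ℕ) :
    ∑ lam ∈ Pfin (d 2), (PowerSeries.coeff (d 1) (specM lam))
        * (PowerSeries.coeff (d 0) (specHMulti lam))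
      = ((Tfin (max (d 0) (d 1) + 1) d).card : ℤ) := by
  classical
  have step1 : ∀ lam ∈ Pfin (d 2),
      (PowerSeries.coeff (d 1) (specM lam)) * (PowerSeries.coeff (d 0) (specHMulti lam))
        = ∑ α ∈ MFin lam (d 1) (d 2), ((SigF (d 0) α).card : ℤ) := by
    intro lam hlam
    rw [mem_Pfin] at hlam
    have hper : ∀ α ∈ MFin lam (d 1) (d 2),
        (PowerSeries.coeff (d 0) (specHMulti lam)) = ((SigF (d 0) α).card : ℤ) := by
      intro α hα
      rw [MFin, Finset.mem_filter] at hα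
      rw [specHMulti_eq hα.2.1, coeff_H_card]
    calc (PowerSeries.coeff (d 1) (specM lam)) * (PowerSeries.coeff (d 0) (specHMulti lam))
        = ((MFin lam (d 1) (d 2)).card : ℤ) * (PowerSeries.coeff (d 0) (specHMulti lam)) := by
          rw [coeff_specM hlam.2]
      _ = ∑ α ∈ MFin lam (d 1) (d 2), (PowerSeries.coeff (d 0) (specHMulti lam)) := by
          rw [Finset.sum_const, nsmul_eq_mul]
      _ = ∑ α ∈ MFin lam (d 1) (d 2), ((SigF (d 0) α).card : ℤ) :=
          Finset.sum_congr rfl hper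
  have hmaps : ∀ α ∈ AllM (d 1) (d 2), Multiset.map α α.support.val ∈ Pfin (d 2) := by
    intro α hα
    rw [mem_AllM] at hα
    rw [mem_Pfin]
    constructor
    · intro h0
      rw [Multiset.mem_map] at h0
      obtain ⟨j, hj, hj0⟩ := h0
      rw [Finset.mem_val] at hj
      exact (Finsupp.mem_support_iff.mp hj) hj0
    · rw [← support_sum_eq]
      rw [Finset.sum_subset hα.2.1
        (fun x _ hx => Finsupp.notMem_support_iff.mp hx)]
      exact hα.1
  calc ∑ lam ∈ Pfin (d 2), (PowerSeries.coeff (d 1) (specM lam))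
          * (PowerSeries.coeff (d 0) (specHMulti lam))
      = ∑ lam ∈ Pfin (d 2), ∑ α ∈ MFin lam (d 1) (d 2), ((SigF (d 0) α).card : ℤ) :=
        Finset.sum_congr rfl step1
    _ = ∑ lam ∈ Pfin (d 2), ∑ α ∈ (AllM (d 1) (d 2)).filter
          (fun (α : ℕ →₀ ℕ) => Multiset.map α α.support.val = lam), ((SigF (d 0) α).card : ℤ) :=
        Finset.sum_congr rfl (fun lam _ => by rw [MFin_eq_filter])
    _ = ∑ α ∈ AllM (d 1) (d 2), ((SigF (d 0) α).card : ℤ) :=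
        Finset.sum_fiberwise_of_maps_to hmaps (fun α => ((SigF (d 0) α).card : ℤ))
    _ = ((Big d).card : ℤ) := by
        rw [Big, Finset.card_sigma, Nat.cast_sum]
    _ = ((Tfin (max (d 0) (d 1) + 1) d).card : ℤ) := by rw [Big_card]

end CauchyAux

open MvPowerSeries in
theorem cauchy_product_identity :
    ∀ d : Fin 3 →₀ ℕ, ∃ N : ℕ, ∀ M : ℕ, N ≤ M →
      MvPowerSeries.coeff d
        (∏ p ∈ Finset.range M ×ˢ Finset.range M,
          MvPowerSeries.invOfUnit
            (1 - (MvPowerSeries.X 0 : MvPowerSeries (Fin 3) ℤ) ^ p.1 *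
              (MvPowerSeries.X 1) ^ p.2 * MvPowerSeries.X 2) 1)
      = ∑ᶠ lam ∈ {lam : Multiset ℕ | (0 : ℕ) ∉ lam ∧ lam.sum = d 2},
          (PowerSeries.coeff (d 1) (specM lam)) *
            (PowerSeries.coeff (d 0) (specHMulti lam)) := by
  intro d
  refine ⟨max (d 0) (d 1) + 1, fun M hM => ?_⟩
  rw [Finset.prod_congr rfl (fun (p : ℕ × ℕ) _ => invOfUnit_eq_G p.1 p.2)]
  rw [show Finset.range M ×ˢ Finset.range M = sN M from rfl]
  rw [coeff_prod_G, Tfin_stable hM]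
  have hset : {lam : Multiset ℕ | (0 : ℕ) ∉ lam ∧ lam.sum = d 2} = ↑(Pfin (d 2)) := by
    ext lam
    simp [mem_Pfin]
  rw [hset, finsum_mem_coe_finset, rhs_eq_card]
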